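/- The identity process I satisfies the unit laws for composition up to failures equivalence: P ; I ≈_f P and I ; P ≈_f P for every process P. -/

import Mathlib

set_option linter.unnecessarySeqFocus false

/-! # CCS with simultaneous actions (Abramsky, "Process Realizability") -/

/-- Labels: names (`inl`) and co-names (`inr`). -/
abbrev Label : Type := ℕ ⊕ ℕ

/-- The involution `λ ↦ λ̄` exchanging names and co-names. -/
def Label.bar : Label → Label
  | .inl n => .inr n
  | .inr n => .inl n

/-- Actions: finite sets of labels, performed simultaneously.  `τ = ∅`. -/
abbrev Act : Type := Finset Label

/-- A renaming: a partial injective function on labels preserving the involution. -/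
structure Renaming where
  toFun : Label → Option Label
  inj : ∀ ⦃x y z : Label⦄, toFun x = some z → toFun y = some z → x = y
  bar : ∀ x : Label, toFun (Label.bar x) = (toFun x).map Label.bar

/-- The pointwise extension of a renaming to actions. -/
def Renaming.onAction (f : Renaming) (a : Act) : Act :=
  a.filterMap f.toFun (fun _ _ _ hx hy => f.inj (Option.mem_def.mp hx) (Option.mem_def.mp hy))

/-- Guarded process terms of CCS with simultaneous actions:
prefix, countably-indexed guarded sums (all guards non-`τ`), parallel composition,
restriction, renaming, process variables (de Bruijn) and recursion. -/
inductive Proc : Type where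
  | pre (a : Act) (P : Proc)
  | sum (I : Set ℕ) (act : ℕ → Act) (cont : ℕ → Proc) (hg : ∀ n ∈ I, (act n).Nonempty)
  | par (P Q : Proc)
  | restrict (P : Proc) (L : Set Label)
  | rename (P : Proc) (f : Renaming)
  | var (n : ℕ)
  | fix (P : Proc)

/-- The inactive process `0` (the empty sum). -/
def Proc.nil : Proc := .sum ∅ (fun _ => ∅) (fun _ => .var 0) (by simp)

/-- Substitution of a process for the variable with de Bruijn index `d`. -/
def Proc.subst (R : Proc) : ℕ → Proc → Proc
  | d, .pre a P => .pre a (Proc.subst R d P)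
  | d, .sum I act cont hg => .sum I act (fun n => Proc.subst R d (cont n)) hg
  | d, .par P Q => .par (Proc.subst R d P) (Proc.subst R d Q)
  | d, .restrict P L => .restrict (Proc.subst R d P) L
  | d, .rename P f => .rename (Proc.subst R d P) f
  | d, .var n => if n = d then R else .var n
  | d, .fix P => .fix (Proc.subst R (d + 1) P)

/-- The labelled transition relation, with the generalized synchronization rule
for simultaneous (compound) actions. -/
inductive Step : Proc → Act → Proc → Prop where
  | pre {a P} : Step (.pre a P) a P
  | sum {I act cont hg} (j : ℕ) (hj : j ∈ I) : Step (.sum I act cont hg) (act j) (cont j)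
  | restrict {P a Q L} : Step P a Q → (∀ l ∈ a, l ∉ L ∧ Label.bar l ∉ L) →
      Step (.restrict P L) a (.restrict Q L)
  | rename {P a Q} {f : Renaming} : Step P a Q → (∀ l ∈ a, (f.toFun l).isSome) →
      Step (.rename P f) (f.onAction a) (.rename Q f)
  | fix {P a Q} : Step (Proc.subst (.fix P) 0 P) a Q → Step (.fix P) a Q
  | parL {P a P' Q} : Step P a P' → Step (.par P Q) a (.par P' Q)
  | parR {P Q a Q'} : Step Q a Q' → Step (.par P Q) a (.par P Q')
  | sync {P Q P' Q' a b c} : Step P (a ∪ b) P' → Step Q (b.image Label.bar ∪ c) Q' →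
      Disjoint a b → Disjoint (b.image Label.bar) c → Disjoint a c →
      Step (.par P Q) (a ∪ c) (.par P' Q')

/-- Zero or more silent (`τ`) transitions. -/
def TauStar : Proc → Proc → Prop :=
  Relation.ReflTransGen (fun P Q => Step P ∅ Q)

/-- Observable transition `P ⟹a Q`: `τ* a τ*`. -/
def Obs (P : Proc) (a : Act) (Q : Proc) : Prop :=
  ∃ P₁ P₂, TauStar P P₁ ∧ Step P₁ a P₂ ∧ TauStar P₂ Q

/-- Observable transitions along a string of (non-`τ`) actions. -/
inductive ObsSeq : Proc → List Act → Proc → Prop where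
  | nil {P Q} : TauStar P Q → ObsSeq P [] Q
  | cons {P a Q s R} : Obs P a Q → ObsSeq Q s R → ObsSeq P (a :: s) R

/-- The failures of a process: pairs `(s, X)` with `s` a string of nonempty actions and
`X` a set of nonempty actions such that `P ⟹s Q` for some `Q` refusing every action of `X`. -/
def failures (P : Proc) : Set (List Act × Set Act) :=
  { sX | (∀ a ∈ sX.1, a.Nonempty) ∧ (∀ a ∈ sX.2, a.Nonempty) ∧
      ∃ Q, ObsSeq P sX.1 Q ∧ ∀ a ∈ sX.2, ¬∃ R, Obs Q a R }

/-- Failures equivalence. -/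
def FailEq (P Q : Proc) : Prop := failures P = failures Q

/-- Weak simulations (with respect to the observable transitions). -/
def IsWeakSim (R : Proc → Proc → Prop) : Prop :=
  ∀ ⦃P Q⦄, R P Q →
    (∀ P', TauStar P P' → ∃ Q', TauStar Q Q' ∧ R P' Q') ∧
    (∀ a P', (a : Act).Nonempty → Obs P a P' → ∃ Q', Obs Q a Q' ∧ R P' Q')

/-- Weak bisimilarity. -/
def WeakBisim (P Q : Proc) : Prop :=
  ∃ R : Proc → Proc → Prop, IsWeakSim R ∧ IsWeakSim (fun x y => R y x) ∧ R P Q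
/-! ## The split name space and the basic combinators -/

/-- Build a bar-preserving partial injective renaming from a partial injective map on names. -/
def Renaming.ofNameFun (f : ℕ → Option ℕ)
    (hf : ∀ ⦃x y z : ℕ⦄, f x = some z → f y = some z → x = y) : Renaming where
  toFun := fun l =>
    match l with
    | .inl n => (f n).map .inl
    | .inr n => (f n).map .inr
  inj := by
    rintro (x | x) (y | y) (z | z) hx hy <;>
      simp only [Option.map_eq_some_iff] at hx hy <;>
      obtain ⟨a, ha, ha'⟩ := hx <;> obtain ⟨b, hb, hb'⟩ := hy <;>
        solve
          | (cases ha'; cases hb'; exact congrArg _ (hf ha hb))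
          | (cases hb')
          | (cases ha')
  bar := by
    rintro (n | n) <;> cases hf : f n <;> simp [Label.bar, hf]

/-- The underlying name of a label. -/
def Label.name : Label → ℕ := Sum.elim id id

/-- The injection `l` of the name space onto its "left" half (even names). -/
def lRen : Renaming := Renaming.ofNameFun (fun n => some (2 * n)) (by intro x y z hx hy; simp only [Option.some.injEq] at hx hy; omega)

/-- The injection `r` of the name space onto its "right" half (odd names). -/
def rRen : Renaming := Renaming.ofNameFun (fun n => some (2 * n + 1)) (by intro x y z hx hy; simp only [Option.some.injEq] at hx hy; omega)

/-- The partial inverse `l⁻¹` of `l`. -/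
def lInv : Renaming :=
  Renaming.ofNameFun (fun n => if n % 2 = 0 then some (n / 2) else none)
    (by intro x y z hx hy; try dsimp only at hx hy
        split at hx <;> split at hy <;> simp_all <;> omega)

/-- The partial inverse `r⁻¹` of `r`. -/
def rInv : Renaming :=
  Renaming.ofNameFun (fun n => if n % 2 = 1 then some (n / 2) else none)
    (by intro x y z hx hy; try dsimp only at hx hy
        split at hx <;> split at hy <;> simp_all <;> omega)

/-- The left half `ℒ_l` of the label space. -/
def LabL : Set Label := {x | x.name % 2 = 0}

/-- The right half `ℒ_r` of the label space. -/
def LabR : Set Label := {x | x.name % 2 = 1}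

/-- Tensor product: disjoint (non-communicating) parallel composition `P[l] | Q[r]`. -/
def tensor (P Q : Proc) : Proc := .par (P.rename lRen) (Q.rename rRen)

/-- Left (forwards) application `⟨Q | P⟩ = ((Q[l] | P) ∖ ℒ_l)[r⁻¹]`. -/
def lapp (Q P : Proc) : Proc := ((Proc.par (Q.rename lRen) P).restrict LabL).rename rInv

/-- Right (reverse) application `(P | R⟩ = ((P | R[r]) ∖ ℒ_r)[l⁻¹]`. -/
def rapp (P R : Proc) : Proc := ((Proc.par P (R.rename rRen)).restrict LabR).rename lInv

/-! ### The three-fold decomposition `𝒩 = 𝒩₁ ∪̇ 𝒩₂ ∪̇ 𝒩₃` and composition -/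

/-- `φ₁₂ : 𝒩 ≅ 𝒩₁ ∪̇ 𝒩₂` (`𝒩ᵢ` = names `≡ i - 1 (mod 3)`), carrying `𝒩_l` onto `𝒩₁`, `𝒩_r` onto `𝒩₂`. -/
def phi12 : Renaming :=
  Renaming.ofNameFun (fun n => some (if n % 2 = 0 then 3 * (n / 2) else 3 * (n / 2) + 1))
    (by intro x y z hx hy; try dsimp only at hx hy
        simp only [Option.some.injEq] at hx hy
        split at hx <;> split at hy <;> omega)

/-- `φ₂₃ : 𝒩 ≅ 𝒩₂ ∪̇ 𝒩₃`, carrying `𝒩_l` onto `𝒩₂`, `𝒩_r` onto `𝒩₃`. -/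
def phi23 : Renaming :=
  Renaming.ofNameFun (fun n => some (if n % 2 = 0 then 3 * (n / 2) + 1 else 3 * (n / 2) + 2))
    (by intro x y z hx hy; try dsimp only at hx hy
        simp only [Option.some.injEq] at hx hy
        split at hx <;> split at hy <;> omega)

/-- The partial inverse `φ₁₃⁻¹` of `φ₁₃ : 𝒩 ≅ 𝒩₁ ∪̇ 𝒩₃`. -/
def phi13Inv : Renaming :=
  Renaming.ofNameFun
    (fun n => if n % 3 = 0 then some (2 * (n / 3)) else if n % 3 = 2 then some (2 * (n / 3) + 1) else none)
    (by intro x y z hx hy; try dsimp only at hx hy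
        split at hx <;> split at hy <;> simp_all <;> omega)

/-- The middle part `𝒩₂` of the label space (as a set of labels). -/
def Lab2 : Set Label := {x | x.name % 3 = 1}

/-- Composition `P ; Q = ((P[φ₁₂] | Q[φ₂₃]) ∖ 𝒩₂)[φ₁₃⁻¹]`. -/
def comp (P Q : Proc) : Proc :=
  ((Proc.par (P.rename phi12) (Q.rename phi23)).restrict Lab2).rename phi13Inv

/-! ### The identity (wire) process -/

/-- The identity process `I = rec X. Σ_{a ∈ Act₊} (l(a) ∪ r(a)‾).X`. -/
noncomputable def Iproc : Proc :=
  .fix (.sum {n | ∃ a : Act, (Encodable.decode n : Option Act) = some a ∧ a.Nonempty}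
    (fun n =>
      match (Encodable.decode n : Option Act) with
      | some a => lRen.onAction a ∪ (rRen.onAction a).image Label.bar
      | none => {Sum.inl 0})
    (fun _ => .var 0)
    (by rintro n ⟨a, ha, hne⟩
        simp only [ha]
        obtain ⟨x, hx⟩ := hne
        refine Finset.Nonempty.mono Finset.subset_union_left ⟨(Sum.map (2 * ·) (2 * ·)) x, ?_⟩
        simp only [Renaming.onAction, Finset.mem_filterMap]
        exact ⟨x, hx, by cases x <;> rfl⟩))

/-! ## Guarded choice combinators, the additive pairing and injections, `!P`, divergence -/

/-- Binary guarded sum `a.P + b.Q` (guards must be non-`τ`). -/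
def gsum2 (a : Act) (P : Proc) (b : Act) (Q : Proc) (ha : a.Nonempty) (hb : b.Nonempty) : Proc :=
  .sum {0, 1} (fun n => if n = 0 then a else b) (fun n => if n = 0 then P else Q)
    (by intro n _; (try dsimp only); split <;> assumption)

/-- Ternary guarded sum `a.P + b.Q + c.R`. -/
def gsum3 (a : Act) (P : Proc) (b : Act) (Q : Proc) (c : Act) (R : Proc)
    (ha : a.Nonempty) (hb : b.Nonempty) (hc : c.Nonempty) : Proc :=
  .sum {0, 1, 2} (fun n => if n = 0 then a else if n = 1 then b else c)
    (fun n => if n = 0 then P else if n = 1 then Q else R)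
    (by intro n _; (try dsimp only); split <;> [skip; split] <;> assumption)

/-- The distinguished names: `α = 0`, `β = 1`, `ω = 2`, `δ = 3`, `γ = 4`, `σ = 5`. -/
def αAct : Act := {Sum.inl 0}
def βAct : Act := {Sum.inl 1}
def αBar : Act := {Sum.inr 0}
def βBar : Act := {Sum.inr 1}
def ωAct : Act := {Sum.inl 2}
def δBar : Act := {Sum.inr 3}
def γBar : Act := {Sum.inr 4}

/-- The additive pairing `⟨P, Q⟩ = r(α).P + r(β).Q`  (`r(α) = 1`, `r(β) = 3`). -/
def pairR (P Q : Proc) : Proc :=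
  gsum2 {Sum.inl 1} P {Sum.inl 3} Q (Finset.singleton_nonempty _) (Finset.singleton_nonempty _)

/-- The plain additive pairing `α.P + β.Q` used in the realizability clauses for `&`. -/
def pairProc (P Q : Proc) : Proc :=
  gsum2 αAct P βAct Q (Finset.singleton_nonempty _) (Finset.singleton_nonempty _)

/-- The left injection `l(P) = l(α)‾.P`  (`l(α) = 0`). -/
def injl (P : Proc) : Proc := .pre {Sum.inr 0} P

/-- The right injection `r(Q) = r(β)‾.Q`  (`r(β) = 3`). -/
def injr (Q : Proc) : Proc := .pre {Sum.inr 3} Q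

/-- The exponential combinator `!P = rec X.(ω.0 + δ.P + γ.(X[l] | X[r]))`. -/
def bangProc (P : Proc) : Proc :=
  .fix (gsum3 ωAct Proc.nil ({Sum.inl 3} : Act) P ({Sum.inl 4} : Act)
    (.par (Proc.rename (.var 0) lRen) (Proc.rename (.var 0) rRen))
    (Finset.singleton_nonempty _) (Finset.singleton_nonempty _) (Finset.singleton_nonempty _))

/-- `P` diverges if there is an infinite sequence of `τ`-transitions from `P`. -/
def Diverges (P : Proc) : Prop :=
  ∃ f : ℕ → Proc, f 0 = P ∧ ∀ n, Step (f n) ∅ (f (n + 1))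

/-- `P ⊥ Q`: closing the system, `P` and `Q` interacting with each other yield no divergence. -/
def Orth (P Q : Proc) : Prop := ¬ Diverges ((Proc.par P Q).restrict Set.univ)

/-! ## Auxiliary: strong functional bisimulations preserve failures -/

def StrongMatch (F : Proc → Proc) : Prop :=
  ∀ P a X, Step (F P) a X ↔ ∃ P', Step P a P' ∧ X = F P'

theorem StrongMatch.tauStar {F} (hF : StrongMatch F) {P X} :
    TauStar (F P) X ↔ ∃ P', TauStar P P' ∧ X = F P' := by
  constructor
  · intro h
    have : ∀ Y X, TauStar Y X → ∀ P, Y = F P → ∃ P', TauStar P P' ∧ X = F P' := by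
      intro Y X h
      induction h with
      | refl => exact fun P hP => ⟨P, Relation.ReflTransGen.refl, hP⟩
      | tail _ hstep ih =>
        intro P hP
        obtain ⟨Q, hQ, rfl⟩ := ih P hP
        obtain ⟨R, hR, rfl⟩ := (hF Q ∅ _).1 hstep
        exact ⟨R, hQ.tail hR, rfl⟩
    exact this _ _ h P rfl
  · rintro ⟨P', h, rfl⟩
    induction h with
    | refl => exact Relation.ReflTransGen.refl
    | tail _ hstep ih => exact ih.tail ((hF _ ∅ _).2 ⟨_, hstep, rfl⟩)

theorem StrongMatch.obs {F} (hF : StrongMatch F) {P a X} :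
    Obs (F P) a X ↔ ∃ P', Obs P a P' ∧ X = F P' := by
  constructor
  · rintro ⟨P₁, P₂, h1, h2, h3⟩
    obtain ⟨Q₁, hQ₁, rfl⟩ := hF.tauStar.1 h1
    obtain ⟨Q₂, hQ₂, rfl⟩ := (hF Q₁ a _).1 h2
    obtain ⟨Q₃, hQ₃, rfl⟩ := hF.tauStar.1 h3
    exact ⟨Q₃, ⟨Q₁, Q₂, hQ₁, hQ₂, hQ₃⟩, rfl⟩
  · rintro ⟨P', ⟨P₁, P₂, h1, h2, h3⟩, rfl⟩
    exact ⟨F P₁, F P₂, hF.tauStar.2 ⟨P₁, h1, rfl⟩, (hF P₁ a _).2 ⟨P₂, h2, rfl⟩,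
      hF.tauStar.2 ⟨P', h3, rfl⟩⟩

theorem StrongMatch.obsSeq {F} (hF : StrongMatch F) {P s X} :
    ObsSeq (F P) s X ↔ ∃ P', ObsSeq P s P' ∧ X = F P' := by
  constructor
  · intro h
    have : ∀ Y s X, ObsSeq Y s X → ∀ P, Y = F P → ∃ P', ObsSeq P s P' ∧ X = F P' := by
      intro Y s X h
      induction h with
      | @nil _ Q h =>
        rintro P rfl
        obtain ⟨P', h', rfl⟩ := hF.tauStar.1 h
        exact ⟨P', .nil h', rfl⟩
      | @cons _ a Q s R h _ ih =>
        rintro P rfl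
        obtain ⟨Q', hQ', rfl⟩ := hF.obs.1 h
        obtain ⟨R', hR', rfl⟩ := ih _ rfl
        exact ⟨R', .cons hQ' hR', rfl⟩
    exact this _ _ _ h P rfl
  · rintro ⟨P', h, rfl⟩
    induction h with
    | nil h => exact .nil (hF.tauStar.2 ⟨_, h, rfl⟩)
    | cons h _ ih => exact .cons (hF.obs.2 ⟨_, h, rfl⟩) ih

theorem StrongMatch.failEq {F} (hF : StrongMatch F) (P : Proc) : FailEq (F P) P := by
  unfold FailEq failures
  ext ⟨s, Xr⟩
  simp only [Set.mem_setOf_eq]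
  constructor
  · rintro ⟨h1, h2, Q, hQ, hr⟩
    obtain ⟨Q', hQ', rfl⟩ := hF.obsSeq.1 hQ
    refine ⟨h1, h2, Q', hQ', fun a ha => ?_⟩
    rintro ⟨R, hR⟩
    exact hr a ha ⟨F R, hF.obs.2 ⟨R, hR, rfl⟩⟩
  · rintro ⟨h1, h2, Q, hQ, hr⟩
    refine ⟨h1, h2, F Q, hF.obsSeq.2 ⟨Q, hQ, rfl⟩, fun a ha => ?_⟩
    rintro ⟨R, hR⟩
    obtain ⟨R', hR', rfl⟩ := hF.obs.1 hR
    exact hr a ha ⟨R', hR'⟩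

/-! ## Name arithmetic for the renamings -/

def mapL (g : ℕ → ℕ) : Label → Label := Sum.map g g

def g12 (n : ℕ) : ℕ := 3 * (n / 2) + n % 2
def g23 (n : ℕ) : ℕ := 3 * (n / 2) + n % 2 + 1
def gl (n : ℕ) : ℕ := 2 * n
def gr (n : ℕ) : ℕ := 2 * n + 1
def p13 (n : ℕ) : ℕ := 2 * (n / 3) + n % 3 / 2
def half (n : ℕ) : ℕ := n / 2

@[simp] lemma name_mapL (g : ℕ → ℕ) (x : Label) : (mapL g x).name = g x.name := by
  cases x <;> rfl

@[simp] lemma bar_mapL (g : ℕ → ℕ) (x : Label) :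
    Label.bar (mapL g x) = mapL g (Label.bar x) := by
  cases x <;> rfl

@[simp] lemma name_bar (x : Label) : (Label.bar x).name = x.name := by
  cases x <;> rfl

@[simp] lemma bar_bar (x : Label) : Label.bar (Label.bar x) = x := by
  cases x <;> rfl

lemma mapL_comp (g f : ℕ → ℕ) (x : Label) : mapL g (mapL f x) = mapL (fun n => g (f n)) x := by
  cases x <;> rfl

lemma mapL_eq_iff {g f : ℕ → ℕ} {x y : Label} :
    mapL g x = mapL f y ↔
      ((∃ n m, x = Sum.inl n ∧ y = Sum.inl m ∧ g n = f m) ∨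
       (∃ n m, x = Sum.inr n ∧ y = Sum.inr m ∧ g n = f m)) := by
  cases x <;> cases y <;> simp [mapL]

lemma phi12_toFun (x : Label) : phi12.toFun x = some (mapL g12 x) := by
  cases x <;>
    simp only [phi12, Renaming.ofNameFun, mapL, Sum.map_inl, Sum.map_inr, Option.map_some,
      Option.some.injEq, Sum.inl.injEq, Sum.inr.injEq, g12] <;> split <;> omega

lemma phi23_toFun (x : Label) : phi23.toFun x = some (mapL g23 x) := by
  cases x <;>
    simp only [phi23, Renaming.ofNameFun, mapL, Sum.map_inl, Sum.map_inr, Option.map_some,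
      Option.some.injEq, Sum.inl.injEq, Sum.inr.injEq, g23] <;> split <;> omega

lemma lRen_toFun (x : Label) : lRen.toFun x = some (mapL gl x) := by
  cases x <;> rfl

lemma rRen_toFun (x : Label) : rRen.toFun x = some (mapL gr x) := by
  cases x <;> rfl

lemma phi13Inv_toFun (x : Label) :
    phi13Inv.toFun x = if x.name % 3 = 1 then none else some (mapL p13 x) := by
  cases x with
  | inl n =>
    simp only [phi13Inv, Renaming.ofNameFun, mapL, Sum.map, Label.name, Sum.elim_inl, id,
      Function.comp]
    split_ifs <;> simp_all <;> [skip; skip; omega] <;> (unfold p13; omega)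
  | inr n =>
    simp only [phi13Inv, Renaming.ofNameFun, mapL, Sum.map, Label.name, Sum.elim_inr, id,
      Function.comp]
    split_ifs <;> simp_all <;> [skip; skip; omega] <;> (unfold p13; omega)

lemma mem_onAction {R : Renaming} {g : ℕ → ℕ} (hg : ∀ x, R.toFun x = some (mapL g x))
    {s : Act} {y : Label} : y ∈ R.onAction s ↔ ∃ x ∈ s, mapL g x = y := by
  simp [Renaming.onAction, Finset.mem_filterMap, hg]

lemma mem_phi12 {s : Act} {y : Label} :
    y ∈ phi12.onAction s ↔ ∃ x ∈ s, mapL g12 x = y := mem_onAction phi12_toFun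

lemma mem_phi23 {s : Act} {y : Label} :
    y ∈ phi23.onAction s ↔ ∃ x ∈ s, mapL g23 x = y := mem_onAction phi23_toFun

lemma mem_lRen {s : Act} {y : Label} :
    y ∈ lRen.onAction s ↔ ∃ x ∈ s, mapL gl x = y := mem_onAction lRen_toFun

lemma mem_rRen {s : Act} {y : Label} :
    y ∈ rRen.onAction s ↔ ∃ x ∈ s, mapL gr x = y := mem_onAction rRen_toFun

lemma mem_phi13Inv {s : Act} {y : Label} :
    y ∈ phi13Inv.onAction s ↔ ∃ x ∈ s, x.name % 3 ≠ 1 ∧ mapL p13 x = y := by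
  simp only [Renaming.onAction, Finset.mem_filterMap, phi13Inv_toFun]
  constructor
  · rintro ⟨x, hx, h⟩
    split at h
    · cases h
    · exact ⟨x, hx, by assumption, by injection h⟩
  · rintro ⟨x, hx, h1, h2⟩
    exact ⟨x, hx, by rw [if_neg h1, h2]⟩

lemma mem_Lab2 {x : Label} : x ∈ Lab2 ↔ x.name % 3 = 1 := Iff.rfl

/-! ## The wire process -/

def wireAct (a : Act) : Act := lRen.onAction a ∪ (rRen.onAction a).image Label.bar

lemma mem_wireAct {a : Act} {y : Label} :
    y ∈ wireAct a ↔ ∃ x ∈ a, (mapL gl x = y ∨ Label.bar (mapL gr x) = y) := by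
  simp only [wireAct, Finset.mem_union, mem_lRen, Finset.mem_image, mem_rRen]
  constructor
  · rintro (⟨x, hx, h⟩ | ⟨z, ⟨x, hx, rfl⟩, h⟩)
    · exact ⟨x, hx, Or.inl h⟩
    · exact ⟨x, hx, Or.inr h⟩
  · rintro ⟨x, hx, h | h⟩
    · exact Or.inl ⟨x, hx, h⟩
    · exact Or.inr ⟨mapL gr x, ⟨x, hx, rfl⟩, h⟩

theorem Iproc_step (a : Act) (ha : a.Nonempty) : Step Iproc (wireAct a) Iproc := by
  unfold Iproc
  apply Step.fix
  simp only [Proc.subst, if_pos]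
  have key : wireAct a = (match (Encodable.decode (Encodable.encode a) : Option Act) with
      | some b => lRen.onAction b ∪ (rRen.onAction b).image Label.bar
      | none => ({Sum.inl 0} : Act)) := by rw [Encodable.encodek]; rfl
  rw [key]
  exact Step.sum (Encodable.encode a) ⟨a, Encodable.encodek a, ha⟩

theorem Iproc_step_inv {A : Act} {X : Proc} (h : Step Iproc A X) :
    ∃ a : Act, a.Nonempty ∧ A = wireAct a ∧ X = Iproc := by
  unfold Iproc at h
  cases h with
  | fix h =>
    simp only [Proc.subst, if_pos] at h
    cases h with
    | sum j hj =>
      obtain ⟨a, ha, hne⟩ := hj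
      exact ⟨a, hne, by simp [ha, wireAct], rfl⟩

/-! ## Small simp lemmas and step inversions -/

@[simp] lemma mapL_inl (g : ℕ → ℕ) (n : ℕ) : mapL g (Sum.inl n) = Sum.inl (g n) := rfl
@[simp] lemma mapL_inr (g : ℕ → ℕ) (n : ℕ) : mapL g (Sum.inr n) = Sum.inr (g n) := rfl
@[simp] lemma bar_inl (n : ℕ) : Label.bar (Sum.inl n) = Sum.inr n := rfl
@[simp] lemma bar_inr (n : ℕ) : Label.bar (Sum.inr n) = Sum.inl n := rfl
@[simp] lemma name_inl (n : ℕ) : Label.name (Sum.inl n) = n := rfl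
@[simp] lemma name_inr (n : ℕ) : Label.name (Sum.inr n) = n := rfl

lemma onAction_union (f : Renaming) (s t : Act) :
    f.onAction (s ∪ t) = f.onAction s ∪ f.onAction t := by
  ext y
  simp only [Renaming.onAction, Finset.mem_filterMap, Finset.mem_union]
  constructor
  · rintro ⟨x, hx | hx, h⟩
    · exact Or.inl ⟨x, hx, h⟩
    · exact Or.inr ⟨x, hx, h⟩
  · rintro (⟨x, hx, h⟩ | ⟨x, hx, h⟩)
    · exact ⟨x, Or.inl hx, h⟩
    · exact ⟨x, Or.inr hx, h⟩

lemma step_rename_inv {P : Proc} {f : Renaming} {e : Act} {X : Proc}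
    (h : Step (.rename P f) e X) :
    ∃ b P', Step P b P' ∧ (∀ l ∈ b, (f.toFun l).isSome) ∧ e = f.onAction b ∧
      X = P'.rename f := by
  cases h with
  | rename h hd => exact ⟨_, _, h, hd, rfl, rfl⟩

lemma step_restrict_inv {P : Proc} {L : Set Label} {e : Act} {X : Proc}
    (h : Step (.restrict P L) e X) :
    ∃ Q, Step P e Q ∧ (∀ l ∈ e, l ∉ L ∧ Label.bar l ∉ L) ∧ X = Q.restrict L := by
  cases h with
  | restrict h hd => exact ⟨_, h, hd, rfl⟩

lemma step_par_inv {P Q : Proc} {e : Act} {X : Proc} (h : Step (.par P Q) e X) :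
    (∃ P', Step P e P' ∧ X = .par P' Q) ∨ (∃ Q', Step Q e Q' ∧ X = .par P Q') ∨
    (∃ a b c P' Q', Step P (a ∪ b) P' ∧ Step Q (b.image Label.bar ∪ c) Q' ∧
      Disjoint a b ∧ Disjoint (b.image Label.bar) c ∧ Disjoint a c ∧
      e = a ∪ c ∧ X = .par P' Q') := by
  cases h with
  | parL h => exact Or.inl ⟨_, h, rfl⟩
  | parR h => exact Or.inr (Or.inl ⟨_, h, rfl⟩)
  | sync h1 h2 d1 d2 d3 => exact Or.inr (Or.inr ⟨_, _, _, _, _, h1, h2, d1, d2, d3, rfl, rfl⟩)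

/-! ## Action decompositions -/

def evenPart (e : Act) : Act := e.filter (fun x => Label.name x % 2 = 0)
def oddPart (e : Act) : Act := e.filter (fun x => Label.name x % 2 = 1)
def unshift (e : Act) : Act := e.image (mapL half)
def unshiftBar (e : Act) : Act := e.image (fun x => Label.bar (mapL half x))

lemma evenPart_union_oddPart (e : Act) : evenPart e ∪ oddPart e = e := by
  ext x
  simp only [evenPart, oddPart, Finset.mem_union, Finset.mem_filter]
  constructor
  · rintro (⟨h, _⟩ | ⟨h, _⟩) <;> exact h
  · intro h
    by_cases hx : Label.name x % 2 = 0
    · exact Or.inl ⟨h, hx⟩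
    · exact Or.inr ⟨h, by omega⟩

lemma disjoint_name {s t : Act} (h : ∀ x ∈ s, ∀ y ∈ t, Label.name x ≠ Label.name y) :
    Disjoint s t := by
  rw [Finset.disjoint_left]
  intro x hx hxt
  exact h x hx x hxt rfl

lemma restr_cond {x : Label} (h : Label.name x % 3 ≠ 1) : x ∉ Lab2 ∧ Label.bar x ∉ Lab2 := by
  constructor <;> simp only [mem_Lab2, name_bar] <;> exact h

lemma L_even {e : Act} (he : ∀ x ∈ e, Label.name x % 2 = 0) :
    phi13Inv.onAction (phi12.onAction e) = e := by
  ext y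
  simp only [mem_phi13Inv, mem_phi12]
  constructor
  · rintro ⟨x, ⟨z, hz, rfl⟩, hn, rfl⟩
    have hzev := he z hz
    rcases z with n | n <;>
      · simp only [mapL_inl, mapL_inr, name_inl, name_inr] at *
        have hp : p13 (g12 n) = n := by simp only [p13, g12]; omega
        rw [hp]; exact hz
  · intro hy
    refine ⟨mapL g12 y, ⟨y, hy, rfl⟩, ?_, ?_⟩ <;> have := he y hy <;>
      rcases y with n | n <;> simp only [mapL_inl, mapL_inr, name_inl, name_inr] at * <;>
        first
          | (simp only [g12]; omega)
          | (congr 1; simp only [p13, g12]; omega)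

lemma L_odd {e : Act} (he : ∀ x ∈ e, Label.name x % 2 = 1) :
    phi13Inv.onAction (phi23.onAction e) = e := by
  ext y
  simp only [mem_phi13Inv, mem_phi23]
  constructor
  · rintro ⟨x, ⟨z, hz, rfl⟩, hn, rfl⟩
    have hzo := he z hz
    rcases z with n | n <;>
      · simp only [mapL_inl, mapL_inr, name_inl, name_inr] at *
        have hp : p13 (g23 n) = n := by simp only [p13, g23]; omega
        rw [hp]; exact hz
  · intro hy
    refine ⟨mapL g23 y, ⟨y, hy, rfl⟩, ?_, ?_⟩ <;> have := he y hy <;>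
      rcases y with n | n <;> simp only [mapL_inl, mapL_inr, name_inl, name_inr] at * <;>
        first
          | (simp only [g23]; omega)
          | (congr 1; simp only [p13, g23]; omega)

lemma L_lB {e2 : Act} (he : ∀ x ∈ e2, Label.name x % 2 = 1) :
    phi23.onAction (lRen.onAction (unshiftBar e2)) = (phi12.onAction e2).image Label.bar := by
  ext y
  simp only [mem_phi23, mem_lRen, Finset.mem_image, mem_phi12, unshiftBar]
  constructor
  · rintro ⟨w, ⟨u, ⟨v, hv, rfl⟩, rfl⟩, rfl⟩
    refine ⟨mapL g12 v, ⟨v, hv, rfl⟩, ?_⟩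
    have := he v hv
    rcases v with n | n <;>
      simp only [mapL_inl, mapL_inr, bar_inl, bar_inr, name_inl, name_inr,
        Sum.inl.injEq, Sum.inr.injEq] at * <;>
      (simp only [g12, g23, gl, half]; omega)
  · rintro ⟨w, ⟨v, hv, rfl⟩, rfl⟩
    refine ⟨mapL gl (Label.bar (mapL half v)), ⟨Label.bar (mapL half v), ⟨v, hv, rfl⟩, rfl⟩, ?_⟩
    have := he v hv
    rcases v with n | n <;>
      simp only [mapL_inl, mapL_inr, bar_inl, bar_inr, name_inl, name_inr,
        Sum.inl.injEq, Sum.inr.injEq] at * <;>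
      (simp only [g12, g23, gl, half]; omega)

lemma L_C {e2 : Act} (he : ∀ x ∈ e2, Label.name x % 2 = 1) :
    phi13Inv.onAction (phi23.onAction ((rRen.onAction (unshiftBar e2)).image Label.bar)) = e2 := by
  ext y
  simp only [mem_phi13Inv, mem_phi23, Finset.mem_image, mem_rRen, unshiftBar]
  constructor
  · rintro ⟨x, ⟨w, ⟨u, ⟨v, ⟨z, hz, rfl⟩, rfl⟩, rfl⟩, rfl⟩, hn, rfl⟩
    have := he z hz
    rcases z with n | n <;>
      · simp only [mapL_inl, mapL_inr, bar_inl, bar_inr, name_inl, name_inr] at *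
        have hp : p13 (g23 (gr (half n))) = n := by simp only [p13, g23, gr, half]; omega
        rw [hp]; exact hz
  · intro hy
    refine ⟨mapL g23 (Label.bar (mapL gr (Label.bar (mapL half y)))),
      ⟨Label.bar (mapL gr (Label.bar (mapL half y))),
        ⟨mapL gr (Label.bar (mapL half y)), ⟨Label.bar (mapL half y), ⟨y, hy, rfl⟩, rfl⟩, rfl⟩,
        rfl⟩, ?_, ?_⟩ <;> have := he y hy <;>
      rcases y with n | n <;>
        simp only [mapL_inl, mapL_inr, bar_inl, bar_inr, name_inl, name_inr,
          Sum.inl.injEq, Sum.inr.injEq] at * <;>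
        (simp only [p13, g23, gr, half]; omega)

lemma L_lA {e1 : Act} (he : ∀ x ∈ e1, Label.name x % 2 = 0) :
    phi12.onAction ((rRen.onAction (unshift e1)).image Label.bar) =
      (phi23.onAction e1).image Label.bar := by
  ext y
  simp only [mem_phi12, mem_phi23, Finset.mem_image, mem_rRen, unshift]
  constructor
  · rintro ⟨w, ⟨u, ⟨v, ⟨z, hz, rfl⟩, rfl⟩, rfl⟩, rfl⟩
    refine ⟨mapL g23 z, ⟨z, hz, rfl⟩, ?_⟩
    have := he z hz
    rcases z with n | n <;>
      simp only [mapL_inl, mapL_inr, bar_inl, bar_inr, name_inl, name_inr,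
        Sum.inl.injEq, Sum.inr.injEq] at * <;>
      (simp only [g12, g23, gr, half]; omega)
  · rintro ⟨w, ⟨v, hv, rfl⟩, rfl⟩
    refine ⟨Label.bar (mapL gr (mapL half v)),
      ⟨mapL gr (mapL half v), ⟨mapL half v, ⟨v, hv, rfl⟩, rfl⟩, rfl⟩, ?_⟩
    have := he v hv
    rcases v with n | n <;>
      simp only [mapL_inl, mapL_inr, bar_inl, bar_inr, name_inl, name_inr,
        Sum.inl.injEq, Sum.inr.injEq] at * <;>
      (simp only [g12, g23, gr, half]; omega)

lemma L_A2 {e1 : Act} (he : ∀ x ∈ e1, Label.name x % 2 = 0) :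
    phi13Inv.onAction (phi12.onAction (lRen.onAction (unshift e1))) = e1 := by
  ext y
  simp only [mem_phi13Inv, mem_phi12, mem_lRen, Finset.mem_image, unshift]
  constructor
  · rintro ⟨x, ⟨w, ⟨u, ⟨z, hz, rfl⟩, rfl⟩, rfl⟩, hn, rfl⟩
    have := he z hz
    rcases z with n | n <;>
      · simp only [mapL_inl, mapL_inr, name_inl, name_inr] at *
        have hp : p13 (g12 (gl (half n))) = n := by simp only [p13, g12, gl, half]; omega
        rw [hp]; exact hz
  · intro hy
    refine ⟨mapL g12 (mapL gl (mapL half y)),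
      ⟨mapL gl (mapL half y), ⟨mapL half y, ⟨y, hy, rfl⟩, rfl⟩, rfl⟩, ?_, ?_⟩ <;>
      have := he y hy <;>
      rcases y with n | n <;>
        simp only [mapL_inl, mapL_inr, name_inl, name_inr, Sum.inl.injEq, Sum.inr.injEq] at * <;>
        (simp only [p13, g12, gl, half]; omega)

/-! ## Forward step simulations -/

lemma image_bar_image_bar (s : Act) : (s.image Label.bar).image Label.bar = s := by
  ext x
  simp only [Finset.mem_image]
  constructor
  · rintro ⟨y, ⟨z, hz, rfl⟩, rfl⟩
    rwa [bar_bar]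
  · intro hx
    exact ⟨Label.bar x, ⟨x, hx, rfl⟩, bar_bar x⟩

lemma mem_evenPart {e : Act} {x : Label} (hx : x ∈ evenPart e) :
    x ∈ e ∧ Label.name x % 2 = 0 := Finset.mem_filter.mp hx

lemma mem_oddPart {e : Act} {x : Label} (hx : x ∈ oddPart e) :
    x ∈ e ∧ Label.name x % 2 = 1 := Finset.mem_filter.mp hx

lemma phi12_tot {s : Act} : ∀ l ∈ s, (phi12.toFun l).isSome := fun l _ => by
  rw [phi12_toFun]; rfl

lemma phi23_tot {s : Act} : ∀ l ∈ s, (phi23.toFun l).isSome := fun l _ => by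
  rw [phi23_toFun]; rfl

lemma nameA1 {e : Act} {x : Label} (hx : x ∈ phi12.onAction (evenPart e)) :
    Label.name x % 3 = 0 := by
  rw [mem_phi12] at hx
  obtain ⟨u, hu, rfl⟩ := hx
  have := (mem_evenPart hu).2
  simp only [name_mapL, g12]
  omega

lemma nameB1 {e : Act} {x : Label} (hx : x ∈ phi12.onAction (oddPart e)) :
    Label.name x % 3 = 1 := by
  rw [mem_phi12] at hx
  obtain ⟨u, hu, rfl⟩ := hx
  have := (mem_oddPart hu).2
  simp only [name_mapL, g12]
  omega

lemma nameC1 {a : Act} {x : Label} (hx : x ∈ phi23.onAction ((rRen.onAction a).image Label.bar)) :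
    Label.name x % 3 = 2 := by
  rw [mem_phi23] at hx
  obtain ⟨u, hu, rfl⟩ := hx
  rw [Finset.mem_image] at hu
  obtain ⟨v, hv, rfl⟩ := hu
  rw [mem_rRen] at hv
  obtain ⟨w, hw, rfl⟩ := hv
  simp only [name_mapL, name_bar, g23, gr]
  omega

lemma nameA2 {a : Act} {x : Label} (hx : x ∈ phi12.onAction (lRen.onAction a)) :
    Label.name x % 3 = 0 := by
  rw [mem_phi12] at hx
  obtain ⟨u, hu, rfl⟩ := hx
  rw [mem_lRen] at hu
  obtain ⟨w, hw, rfl⟩ := hu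
  simp only [name_mapL, g12, gl]
  omega

lemma nameB2 {a : Act} {x : Label} (hx : x ∈ phi12.onAction ((rRen.onAction a).image Label.bar)) :
    Label.name x % 3 = 1 := by
  rw [mem_phi12] at hx
  obtain ⟨u, hu, rfl⟩ := hx
  rw [Finset.mem_image] at hu
  obtain ⟨v, hv, rfl⟩ := hu
  rw [mem_rRen] at hv
  obtain ⟨w, hw, rfl⟩ := hv
  simp only [name_mapL, name_bar, g12, gr]
  omega

lemma nameC2 {e : Act} {x : Label} (hx : x ∈ phi23.onAction (oddPart e)) :
    Label.name x % 3 = 2 := by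
  rw [mem_phi23] at hx
  obtain ⟨u, hu, rfl⟩ := hx
  have := (mem_oddPart hu).2
  simp only [name_mapL, g23]
  omega

lemma name_mem_bar {s : Act} {x : Label} (hx : x ∈ s.image Label.bar) :
    ∃ y ∈ s, Label.name x = Label.name y := by
  rw [Finset.mem_image] at hx
  obtain ⟨y, hy, rfl⟩ := hx
  exact ⟨y, hy, name_bar y⟩

lemma phi13Inv_tot {s : Act} (hs : ∀ x ∈ s, Label.name x % 3 ≠ 1) :
    ∀ l ∈ s, (phi13Inv.toFun l).isSome := by
  intro l hl
  rw [phi13Inv_toFun, if_neg (hs l hl)]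
  rfl

theorem stepF1_fwd {P e P'} (h : Step P e P') : Step (comp P Iproc) e (comp P' Iproc) := by
  classical
  have hev1 : ∀ x ∈ evenPart e, Label.name x % 2 = 0 := fun x hx => (mem_evenPart hx).2
  have hodd1 : ∀ x ∈ oddPart e, Label.name x % 2 = 1 := fun x hx => (mem_oddPart hx).2
  by_cases hev : ∀ x ∈ e, Label.name x % 2 = 0
  · -- P moves alone (parL)
    have h1 : Step (P.rename phi12) (phi12.onAction e) (P'.rename phi12) :=
      Step.rename h phi12_tot
    have h2 := Step.restrict (L := Lab2) (Step.parL (Q := Iproc.rename phi23) h1) (by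
      intro l hl
      rw [mem_phi12] at hl
      obtain ⟨x, hx, rfl⟩ := hl
      have := hev x hx
      exact restr_cond (by simp only [name_mapL, g12]; omega))
    have h3 := Step.rename (f := phi13Inv) h2 (phi13Inv_tot (by
      intro l hl
      rw [mem_phi12] at hl
      obtain ⟨x, hx, rfl⟩ := hl
      have := hev x hx
      simp only [name_mapL, g12]
      omega))
    rw [L_even hev] at h3
    exact h3
  · -- synchronization through the wire
    push_neg at hev
    obtain ⟨x₀, hx₀, hx₀o⟩ := hev
    have hane : (unshiftBar (oddPart e)).Nonempty := by
      refine ⟨_, Finset.mem_image_of_mem _ (Finset.mem_filter.mpr ⟨hx₀, by omega⟩)⟩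
    have hPA : Step (P.rename phi12)
        (phi12.onAction (evenPart e) ∪ phi12.onAction (oddPart e)) (P'.rename phi12) := by
      have h1 := Step.rename (f := phi12) h phi12_tot
      rwa [← evenPart_union_oddPart e, onAction_union] at h1
    have hWire : Step (Iproc.rename phi23)
        ((phi12.onAction (oddPart e)).image Label.bar ∪
          phi23.onAction ((rRen.onAction (unshiftBar (oddPart e))).image Label.bar))
        (Iproc.rename phi23) := by
      have h1 := Step.rename (f := phi23) (Iproc_step _ hane) phi23_tot
      rwa [wireAct, onAction_union, L_lB hodd1] at h1
    have hsync := Step.sync hPA hWire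
      (disjoint_name (fun x hx y hy => by
        have := nameA1 hx; have := nameB1 hy; omega))
      (disjoint_name (fun x hx y hy => by
        obtain ⟨z, hz, hzn⟩ := name_mem_bar hx
        have := nameB1 hz; have := nameC1 hy; omega))
      (disjoint_name (fun x hx y hy => by
        have := nameA1 hx; have := nameC1 hy; omega))
    have hn3 : ∀ x ∈ phi12.onAction (evenPart e) ∪
        phi23.onAction ((rRen.onAction (unshiftBar (oddPart e))).image Label.bar),
        Label.name x % 3 ≠ 1 := by
      intro x hx
      rcases Finset.mem_union.mp hx with hx | hx
      · have := nameA1 hx; omega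
      · have := nameC1 hx; omega
    have h2 := Step.restrict (L := Lab2) hsync (fun l hl => restr_cond (hn3 l hl))
    have h3 := Step.rename (f := phi13Inv) h2 (phi13Inv_tot hn3)
    rw [onAction_union, L_even hev1, L_C hodd1, evenPart_union_oddPart] at h3
    exact h3

theorem stepF2_fwd {P e P'} (h : Step P e P') : Step (comp Iproc P) e (comp Iproc P') := by
  classical
  have hev1 : ∀ x ∈ evenPart e, Label.name x % 2 = 0 := fun x hx => (mem_evenPart hx).2
  have hodd1 : ∀ x ∈ oddPart e, Label.name x % 2 = 1 := fun x hx => (mem_oddPart hx).2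
  by_cases hodd : ∀ x ∈ e, Label.name x % 2 = 1
  · -- P moves alone (parR)
    have h1 : Step (P.rename phi23) (phi23.onAction e) (P'.rename phi23) :=
      Step.rename h phi23_tot
    have h2 := Step.restrict (L := Lab2) (Step.parR (P := Iproc.rename phi12) h1) (by
      intro l hl
      rw [mem_phi23] at hl
      obtain ⟨x, hx, rfl⟩ := hl
      have := hodd x hx
      exact restr_cond (by simp only [name_mapL, g23]; omega))
    have h3 := Step.rename (f := phi13Inv) h2 (phi13Inv_tot (by
      intro l hl
      rw [mem_phi23] at hl
      obtain ⟨x, hx, rfl⟩ := hl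
      have := hodd x hx
      simp only [name_mapL, g23]
      omega))
    rw [L_odd hodd] at h3
    exact h3
  · push_neg at hodd
    obtain ⟨x₀, hx₀, hx₀e⟩ := hodd
    have hane : (unshift (evenPart e)).Nonempty := by
      refine ⟨_, Finset.mem_image_of_mem _ (Finset.mem_filter.mpr ⟨hx₀, by omega⟩)⟩
    have hWire : Step (Iproc.rename phi12)
        (phi12.onAction (lRen.onAction (unshift (evenPart e))) ∪
          phi12.onAction ((rRen.onAction (unshift (evenPart e))).image Label.bar))
        (Iproc.rename phi12) := by
      have h1 := Step.rename (f := phi12) (Iproc_step _ hane) phi12_tot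
      rwa [wireAct, onAction_union] at h1
    have hPB : Step (P.rename phi23)
        ((phi12.onAction ((rRen.onAction (unshift (evenPart e))).image Label.bar)).image Label.bar
          ∪ phi23.onAction (oddPart e)) (P'.rename phi23) := by
      have h1 := Step.rename (f := phi23) h phi23_tot
      rwa [← evenPart_union_oddPart e, onAction_union, show phi23.onAction (evenPart e) =
        (phi12.onAction ((rRen.onAction (unshift (evenPart e))).image Label.bar)).image Label.bar
        from by rw [L_lA hev1, image_bar_image_bar]] at h1
    have hsync := Step.sync hWire hPB
      (disjoint_name (fun x hx y hy => by
        have := nameA2 hx; have := nameB2 hy; omega))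
      (disjoint_name (fun x hx y hy => by
        obtain ⟨z, hz, hzn⟩ := name_mem_bar hx
        have := nameB2 hz; have := nameC2 hy; omega))
      (disjoint_name (fun x hx y hy => by
        have := nameA2 hx; have := nameC2 hy; omega))
    have hn3 : ∀ x ∈ phi12.onAction (lRen.onAction (unshift (evenPart e))) ∪
        phi23.onAction (oddPart e), Label.name x % 3 ≠ 1 := by
      intro x hx
      rcases Finset.mem_union.mp hx with hx | hx
      · have := nameA2 hx; omega
      · have := nameC2 hx; omega
    have h2 := Step.restrict (L := Lab2) hsync (fun l hl => restr_cond (hn3 l hl))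
    have h3 := Step.rename (f := phi13Inv) h2 (phi13Inv_tot hn3)
    rw [onAction_union, L_A2 hev1, L_odd hodd1, evenPart_union_oddPart] at h3
    exact h3

/-! ## Step inversions for the composites -/

lemma mem_phi23_wire {a0 : Act} {y : Label} :
    y ∈ phi23.onAction (wireAct a0) ↔
      ∃ u ∈ a0, (mapL g23 (mapL gl u) = y ∨ mapL g23 (Label.bar (mapL gr u)) = y) := by
  simp only [mem_phi23, mem_wireAct]
  constructor
  · rintro ⟨x, ⟨u, hu, h | h⟩, rfl⟩
    · exact ⟨u, hu, Or.inl (by rw [h])⟩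
    · exact ⟨u, hu, Or.inr (by rw [h])⟩
  · rintro ⟨u, hu, h | h⟩
    · exact ⟨mapL gl u, ⟨u, hu, Or.inl rfl⟩, h⟩
    · exact ⟨Label.bar (mapL gr u), ⟨u, hu, Or.inr rfl⟩, h⟩

lemma mem_phi12_wire {a0 : Act} {y : Label} :
    y ∈ phi12.onAction (wireAct a0) ↔
      ∃ u ∈ a0, (mapL g12 (mapL gl u) = y ∨ mapL g12 (Label.bar (mapL gr u)) = y) := by
  simp only [mem_phi12, mem_wireAct]
  constructor
  · rintro ⟨x, ⟨u, hu, h | h⟩, rfl⟩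
    · exact ⟨u, hu, Or.inl (by rw [h])⟩
    · exact ⟨u, hu, Or.inr (by rw [h])⟩
  · rintro ⟨u, hu, h | h⟩
    · exact ⟨mapL gl u, ⟨u, hu, Or.inl rfl⟩, h⟩
    · exact ⟨Label.bar (mapL gr u), ⟨u, hu, Or.inr rfl⟩, h⟩

lemma name_phi12 {s : Act} {x : Label} (hx : x ∈ phi12.onAction s) :
    Label.name x % 3 = 0 ∨ Label.name x % 3 = 1 := by
  rw [mem_phi12] at hx
  obtain ⟨u, _, rfl⟩ := hx
  simp only [name_mapL, g12]
  omega

lemma name_phi23 {s : Act} {x : Label} (hx : x ∈ phi23.onAction s) :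
    Label.name x % 3 = 1 ∨ Label.name x % 3 = 2 := by
  rw [mem_phi23] at hx
  obtain ⟨u, _, rfl⟩ := hx
  simp only [name_mapL, g23]
  omega

theorem stepF1_inv {P e X} (h : Step (comp P Iproc) e X) :
    ∃ P', Step P e P' ∧ X = comp P' Iproc := by
  obtain ⟨b0, Y, h0, _, rfl, rfl⟩ := step_rename_inv h
  obtain ⟨Z, h1, hres, rfl⟩ := step_restrict_inv h0
  have hn : ∀ l ∈ b0, Label.name l % 3 ≠ 1 := by
    intro l hl
    have := (hres l hl).1
    simpa [mem_Lab2] using this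
  rcases step_par_inv h1 with ⟨W, hP, rfl⟩ | ⟨W, hW, rfl⟩ |
    ⟨A, B, C, W1, W2, hPA, hWB, dAB, dBC, dAC, rfl, rfl⟩
  · -- P moves alone
    obtain ⟨b, P', hstep, _, rfl, rfl⟩ := step_rename_inv hP
    have hb : ∀ x ∈ b, Label.name x % 2 = 0 := by
      intro x hx
      have := hn _ (mem_phi12.mpr ⟨x, hx, rfl⟩)
      simp only [name_mapL, g12] at this
      omega
    exact ⟨P', by rwa [L_even hb], rfl⟩
  · -- wire moves alone: impossible
    obtain ⟨A0, I', hI, _, rfl, rfl⟩ := step_rename_inv hW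
    obtain ⟨a0, hane, rfl, rfl⟩ := Iproc_step_inv hI
    exfalso
    obtain ⟨u, hu⟩ := hane
    have hmem : mapL g23 (mapL gl u) ∈ phi23.onAction (wireAct a0) :=
      mem_phi23_wire.mpr ⟨u, hu, Or.inl rfl⟩
    have := hn _ hmem
    simp only [name_mapL, g23, gl] at this
    omega
  · -- synchronization
    obtain ⟨bP, P', hstep, _, hAB, rfl⟩ := step_rename_inv hPA
    obtain ⟨A0, I', hI, _, hBC, rfl⟩ := step_rename_inv hWB
    obtain ⟨a0, hane, rfl, rfl⟩ := Iproc_step_inv hI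
    have hBn : ∀ v ∈ B, Label.name v % 3 = 0 ∨ Label.name v % 3 = 1 := fun v hv =>
      name_phi12 (hAB ▸ Finset.mem_union_right A hv)
    have key : phi13Inv.onAction (A ∪ C) = bP := by
      ext y
      rw [mem_phi13Inv]
      constructor
      · rintro ⟨x, hxAC, hxn, rfl⟩
        rcases Finset.mem_union.mp hxAC with hx | hx
        · -- x ∈ A comes from an even-name label of bP
          have hx' : x ∈ phi12.onAction bP := hAB ▸ Finset.mem_union_left B hx
          rw [mem_phi12] at hx'
          obtain ⟨z, hz, rfl⟩ := hx'
          have hzn : Label.name z % 2 = 0 := by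
            simp only [name_mapL, g12] at hxn
            omega
          rcases z with n | n <;>
            · simp only [name_inl, name_inr] at hzn
              simp only [mapL_inl, mapL_inr]
              have hp : p13 (g12 n) = n := by simp only [p13, g12]; omega
              rw [hp]; exact hz
        · -- x ∈ C comes from the wire's right-hand half
          have hx' : x ∈ phi23.onAction (wireAct a0) :=
            hBC ▸ Finset.mem_union_right (B.image Label.bar) hx
          rcases mem_phi23_wire.mp hx' with ⟨u, hu, rfl | rfl⟩
          · exfalso
            simp only [name_mapL, g23, gl] at hxn
            omega
          · -- the matching left-hand half of the wire action synchronized with `bP`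
            have hw : mapL g23 (mapL gl u) ∈ B.image Label.bar ∪ C :=
              hBC.symm ▸ mem_phi23_wire.mpr ⟨u, hu, Or.inl rfl⟩
            rcases Finset.mem_union.mp hw with hw | hw
            · rw [Finset.mem_image] at hw
              obtain ⟨v, hvB, hvbar⟩ := hw
              have hv' : v ∈ phi12.onAction bP := hAB ▸ Finset.mem_union_right A hvB
              rw [mem_phi12] at hv'
              obtain ⟨z, hz, rfl⟩ := hv'
              rcases z with n | n <;> rcases u with k | k <;>
                simp only [mapL_inl, mapL_inr, bar_inl, bar_inr, Sum.inl.injEq,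
                  Sum.inr.injEq] at hvbar ⊢ <;>
                first
                  | exact absurd hvbar (by simp)
                  | (have hp : p13 (g23 (gr k)) = n := by
                      simp only [p13, g23, g12, gr, gl] at hvbar ⊢; omega
                     rw [hp]; exact hz)
            · exfalso
              have := hn _ (Finset.mem_union_right A hw)
              simp only [name_mapL, g23, gl] at this
              omega
      · intro hy
        have hy' : mapL g12 y ∈ A ∪ B := hAB.symm ▸ mem_phi12.mpr ⟨y, hy, rfl⟩
        rcases Finset.mem_union.mp hy' with hA | hB
        · have hxn := hn _ (Finset.mem_union_left C hA)
          refine ⟨mapL g12 y, Finset.mem_union_left C hA, hxn, ?_⟩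
          rcases y with n | n <;>
            · simp only [name_mapL, name_inl, name_inr, g12] at hxn
              simp only [mapL_inl, mapL_inr, Sum.inl.injEq, Sum.inr.injEq]
              simp only [p13, g12]
              omega
        · have hw : Label.bar (mapL g12 y) ∈ phi23.onAction (wireAct a0) :=
            hBC ▸ Finset.mem_union_left C (Finset.mem_image_of_mem _ hB)
          rcases mem_phi23_wire.mp hw with ⟨u, hu, hequ | hequ⟩
          · -- the wire's right-hand half contributes y back
            have hw2 : mapL g23 (Label.bar (mapL gr u)) ∈ B.image Label.bar ∪ C :=
              hBC.symm ▸ mem_phi23_wire.mpr ⟨u, hu, Or.inr rfl⟩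
            rcases Finset.mem_union.mp hw2 with hw2 | hw2
            · exfalso
              obtain ⟨v, hv, hveq⟩ := Finset.mem_image.mp hw2
              have := hBn v hv
              have hne : Label.name (Label.bar v) = Label.name (mapL g23 (Label.bar (mapL gr u))) := by
                rw [hveq]
              simp only [name_bar, name_mapL, g23, gr] at hne
              omega
            · refine ⟨mapL g23 (Label.bar (mapL gr u)), Finset.mem_union_right A hw2, ?_, ?_⟩
              · simp only [name_mapL, name_bar, g23, gr]
                omega
              · rcases u with k | k <;> rcases y with n | n <;>
                  simp only [mapL_inl, mapL_inr, bar_inl, bar_inr, Sum.inl.injEq,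
                    Sum.inr.injEq] at hequ ⊢ <;>
                  first
                    | exact absurd hequ (by simp)
                    | (simp only [p13, g23, g12, gr, gl] at hequ ⊢; omega)
          · exfalso
            have hne : Label.name (Label.bar (mapL g12 y)) =
                Label.name (mapL g23 (Label.bar (mapL gr u))) := by rw [hequ]
            simp only [name_bar, name_mapL, g12, g23, gr] at hne
            omega
    exact ⟨P', by rwa [key], rfl⟩

theorem stepF2_inv {P e X} (h : Step (comp Iproc P) e X) :
    ∃ P', Step P e P' ∧ X = comp Iproc P' := by
  obtain ⟨b0, Y, h0, _, rfl, rfl⟩ := step_rename_inv h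
  obtain ⟨Z, h1, hres, rfl⟩ := step_restrict_inv h0
  have hn : ∀ l ∈ b0, Label.name l % 3 ≠ 1 := by
    intro l hl
    have := (hres l hl).1
    simpa [mem_Lab2] using this
  rcases step_par_inv h1 with ⟨W, hW, rfl⟩ | ⟨W, hP, rfl⟩ |
    ⟨A, B, C, W1, W2, hWA, hPB, dAB, dBC, dAC, rfl, rfl⟩
  · -- wire moves alone: impossible
    obtain ⟨A0, I', hI, _, rfl, rfl⟩ := step_rename_inv hW
    obtain ⟨a0, hane, rfl, rfl⟩ := Iproc_step_inv hI
    exfalso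
    obtain ⟨u, hu⟩ := hane
    have hmem : mapL g12 (Label.bar (mapL gr u)) ∈ phi12.onAction (wireAct a0) :=
      mem_phi12_wire.mpr ⟨u, hu, Or.inr rfl⟩
    have := hn _ hmem
    simp only [name_mapL, name_bar, g12, gr] at this
    omega
  · -- P moves alone
    obtain ⟨b, P', hstep, _, rfl, rfl⟩ := step_rename_inv hP
    have hb : ∀ x ∈ b, Label.name x % 2 = 1 := by
      intro x hx
      have := hn _ (mem_phi23.mpr ⟨x, hx, rfl⟩)
      simp only [name_mapL, g23] at this
      omega
    exact ⟨P', by rwa [L_odd hb], rfl⟩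
  · -- synchronization
    obtain ⟨A0, I', hI, _, hAB, rfl⟩ := step_rename_inv hWA
    obtain ⟨a0, hane, rfl, rfl⟩ := Iproc_step_inv hI
    obtain ⟨bP, P', hstep, _, hBC, rfl⟩ := step_rename_inv hPB
    have hBn : ∀ v ∈ B, Label.name v % 3 = 1 ∨ Label.name v % 3 = 2 := by
      intro v hv
      have := name_phi23 (hBC ▸ Finset.mem_union_left C (Finset.mem_image_of_mem Label.bar hv))
      rwa [name_bar] at this
    have key : phi13Inv.onAction (A ∪ C) = bP := by
      ext y
      rw [mem_phi13Inv]
      constructor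
      · rintro ⟨x, hxAC, hxn, rfl⟩
        rcases Finset.mem_union.mp hxAC with hx | hx
        · -- x ∈ A comes from the wire's left half
          have hx' : x ∈ phi12.onAction (wireAct a0) := hAB ▸ Finset.mem_union_left B hx
          rcases mem_phi12_wire.mp hx' with ⟨u, hu, rfl | rfl⟩
          · -- the matching 𝒩₂ half synchronized with bP
            have hw : mapL g12 (Label.bar (mapL gr u)) ∈ A ∪ B :=
              hAB.symm ▸ mem_phi12_wire.mpr ⟨u, hu, Or.inr rfl⟩
            rcases Finset.mem_union.mp hw with hw | hw
            · exfalso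
              have := hn _ (Finset.mem_union_left C hw)
              simp only [name_mapL, name_bar, g12, gr] at this
              omega
            · have hv' : Label.bar (mapL g12 (Label.bar (mapL gr u))) ∈ phi23.onAction bP :=
                hBC ▸ Finset.mem_union_left C (Finset.mem_image_of_mem _ hw)
              rw [mem_phi23] at hv'
              obtain ⟨z, hz, hzeq⟩ := hv'
              rcases z with n | n <;> rcases u with k | k <;>
                simp only [mapL_inl, mapL_inr, bar_inl, bar_inr, Sum.inl.injEq,
                  Sum.inr.injEq] at hzeq ⊢ <;>
                first
                  | exact absurd hzeq (by simp)
                  | (have hp : p13 (g12 (gl k)) = n := by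
                      simp only [p13, g23, g12, gr, gl] at hzeq ⊢; omega
                     rw [hp]; exact hz)
          · exfalso
            simp only [name_mapL, name_bar, g12, gr] at hxn
            omega
        · -- x ∈ C comes from an odd-name label of bP
          have hx' : x ∈ phi23.onAction bP :=
            hBC ▸ Finset.mem_union_right (B.image Label.bar) hx
          rw [mem_phi23] at hx'
          obtain ⟨z, hz, rfl⟩ := hx'
          have hzn : Label.name z % 2 = 1 := by
            simp only [name_mapL, g23] at hxn
            omega
          rcases z with n | n <;>
            · simp only [name_inl, name_inr] at hzn
              simp only [mapL_inl, mapL_inr]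
              have hp : p13 (g23 n) = n := by simp only [p13, g23]; omega
              rw [hp]; exact hz
      · intro hy
        have hy' : mapL g23 y ∈ B.image Label.bar ∪ C := hBC.symm ▸ mem_phi23.mpr ⟨y, hy, rfl⟩
        rcases Finset.mem_union.mp hy' with hB' | hC'
        · -- y's even half synchronized with the wire
          obtain ⟨v, hv, hveq⟩ := Finset.mem_image.mp hB'
          have hv' : v ∈ phi12.onAction (wireAct a0) := hAB ▸ Finset.mem_union_right A hv
          rcases mem_phi12_wire.mp hv' with ⟨u, hu, hequ | hequ⟩
          · exfalso
            have hne : Label.name (Label.bar v) = Label.name (mapL g23 y) := by rw [hveq]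
            have hne2 : Label.name (mapL g12 (mapL gl u)) = Label.name v := by rw [hequ]
            simp only [name_bar, name_mapL, g12, g23, gl] at hne hne2
            omega
          · -- the wire's 𝒩₁ half survives and maps back to y
            have hw : mapL g12 (mapL gl u) ∈ A ∪ B :=
              hAB.symm ▸ mem_phi12_wire.mpr ⟨u, hu, Or.inl rfl⟩
            rcases Finset.mem_union.mp hw with hw | hw
            · refine ⟨mapL g12 (mapL gl u), Finset.mem_union_left C hw, ?_, ?_⟩
              · simp only [name_mapL, g12, gl]
                omega
              · rw [← hequ] at hveq
                rcases u with k | k <;> rcases y with n | n <;>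
                  simp only [mapL_inl, mapL_inr, bar_inl, bar_inr, Sum.inl.injEq,
                    Sum.inr.injEq] at hveq ⊢ <;>
                  first
                    | exact absurd hveq (by simp)
                    | (simp only [p13, g23, g12, gr, gl] at hveq ⊢; omega)
            · exfalso
              have := hBn _ hw
              simp only [name_mapL, g12, gl] at this
              omega
        · have hxn : Label.name (mapL g23 y) % 3 ≠ 1 := hn _ (Finset.mem_union_right A hC')
          have hyodd : Label.name y % 2 = 1 := by
            simp only [name_mapL, g23] at hxn
            omega
          refine ⟨mapL g23 y, Finset.mem_union_right A hC', hxn, ?_⟩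
          rcases y with n | n <;>
            · simp only [name_inl, name_inr] at hyodd
              simp only [mapL_inl, mapL_inr, Sum.inl.injEq, Sum.inr.injEq]
              simp only [p13, g23]
              omega
    exact ⟨P', by rwa [key], rfl⟩

/-- **The identity process satisfies the unit laws for composition**:
`P ; I ≈_f P` and `I ; P ≈_f P`. -/
theorem wire_unit_for_comp (P : Proc) :
    FailEq (comp P Iproc) P ∧ FailEq (comp Iproc P) P := by
  constructor
  · exact StrongMatch.failEq (F := fun Q => comp Q Iproc)
      (fun Q a X => ⟨stepF1_inv, fun ⟨Q', h, hX⟩ => hX ▸ stepF1_fwd h⟩) P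
  · exact StrongMatch.failEq (F := fun Q => comp Iproc Q)
      (fun Q a X => ⟨stepF2_inv, fun ⟨Q', h, hX⟩ => hX ▸ stepF2_fwd h⟩) P
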